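/- Let f be p-times continuously differentiable with f and its derivatives of exponential order r, and φₙ(s) = ∫₀^∞ e^{-s t}(tⁿ/n!) f(t) dt. Then for n ≥ p and s > r, ∫₀^∞ e^{-s t}(tⁿ/n!) f⁽ᵖ⁾(t) dt = ∇ₛᵖφₙ(s) = Σ_{k=0}^{p}(-1)^k C(p,k) s^{p-k} φ_{n-k}(s). -/

import Mathlib

open MeasureTheory Real Finset Filter

lemma aux_tendsto (m : ℕ) {b : ℝ} (hb : 0 < b) :
    Tendsto (fun t : ℝ => t ^ m * Real.exp (-b * t)) atTop (nhds 0) := by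
  apply (tendsto_rpow_mul_exp_neg_mul_atTop_nhds_zero m b hb).congr'
  filter_upwards [eventually_gt_atTop (0:ℝ)] with t ht
  rw [Real.rpow_natCast]

lemma aux_integrable {g : ℝ → ℝ} {M r s : ℝ} (hM : 0 < M) (hrs : r < s)
    (hg : Continuous g) (hb : ∀ t ≥ (0:ℝ), |g t| ≤ M * Real.exp (r * t)) (m : ℕ) :
    IntegrableOn (fun t => Real.exp (-(s*t)) * (t ^ m / m.factorial) * g t) (Set.Ioi (0:ℝ)) := by
  have hb0 : (0:ℝ) < (s - r) / 2 := by linarith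
  set b : ℝ := (s - r) / 2 with hbdef
  apply integrable_of_isBigO_exp_neg hb0
  · fun_prop
  · rw [Asymptotics.isBigO_iff]
    refine ⟨M / m.factorial, ?_⟩
    have h1 : ∀ᶠ t : ℝ in atTop, t ^ m * Real.exp (-b * t) ≤ 1 :=
      (aux_tendsto m hb0).eventually_le_const one_pos
    filter_upwards [h1, eventually_ge_atTop (0:ℝ)] with t h1t ht0
    have hfac : (0:ℝ) < m.factorial := by positivity
    have hexp : |g t| ≤ M * Real.exp (r * t) := hb t ht0
    have key : Real.exp (-(s*t)) * Real.exp (r*t) = Real.exp (-b*t) * Real.exp (-b*t) := by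
      rw [← Real.exp_add, ← Real.exp_add, hbdef]; ring_nf
    rw [Real.norm_eq_abs, Real.norm_eq_abs, abs_mul, abs_mul, Real.abs_exp, Real.abs_exp]
    rw [abs_div, abs_pow, Nat.abs_cast]
    calc Real.exp (-(s*t)) * (|t| ^ m / m.factorial) * |g t|
        ≤ Real.exp (-(s*t)) * (|t| ^ m / m.factorial) * (M * Real.exp (r*t)) := by
          apply mul_le_mul_of_nonneg_left hexp; positivity
      _ = (M / m.factorial) * (t ^ m * Real.exp (-b*t)) * Real.exp (-b*t) := by
          rw [abs_of_nonneg ht0]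
          rw [show Real.exp (-(s*t)) * (t ^ m / m.factorial) * (M * Real.exp (r*t))
              = (M / m.factorial) * t ^ m * (Real.exp (-(s*t)) * Real.exp (r*t)) by ring, key]
          ring
      _ ≤ (M / m.factorial) * 1 * Real.exp (-b*t) := by
          apply mul_le_mul_of_nonneg_right _ (Real.exp_pos _).le
          apply mul_le_mul_of_nonneg_left h1t; positivity
      _ = (M / m.factorial) * Real.exp (-b*t) := by ring

lemma aux_tendsto_F {g : ℝ → ℝ} {M r s : ℝ} (hM : 0 < M) (hrs : r < s)
    (hb : ∀ t ≥ (0:ℝ), |g t| ≤ M * Real.exp (r * t)) (m : ℕ) :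
    Tendsto (fun t => Real.exp (-(s*t)) * (t ^ m / m.factorial) * g t) atTop (nhds 0) := by
  rw [tendsto_zero_iff_abs_tendsto_zero]
  apply squeeze_zero' (by filter_upwards with t using abs_nonneg _)
    (g := fun t => (M / m.factorial) * (t ^ m * Real.exp (-(s-r) * t)))
  · filter_upwards [eventually_ge_atTop (0:ℝ)] with t ht0
    have hexp : |g t| ≤ M * Real.exp (r * t) := hb t ht0
    simp only [Function.comp_apply]
    rw [abs_mul, abs_mul, Real.abs_exp, abs_div, abs_pow, Nat.abs_cast, abs_of_nonneg ht0]
    calc Real.exp (-(s*t)) * (t ^ m / m.factorial) * |g t|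
        ≤ Real.exp (-(s*t)) * (t ^ m / m.factorial) * (M * Real.exp (r*t)) := by
          apply mul_le_mul_of_nonneg_left hexp; positivity
      _ = (M / m.factorial) * (t ^ m * Real.exp (-(s-r) * t)) := by
          rw [show -(s-r)*t = -(s*t) + r*t by ring, Real.exp_add]; ring
  · have := (aux_tendsto m (b := s - r) (by linarith)).const_mul (M / m.factorial)
    simpa using this

lemma aux_step {g : ℝ → ℝ} {M r s : ℝ} (hM : 0 < M) (hrs : r < s) (hr : 0 < r)
    (hg : Differentiable ℝ g) (hg' : Continuous (deriv g))
    (hb0 : ∀ t ≥ (0:ℝ), |g t| ≤ M * Real.exp (r * t))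
    (hb1 : ∀ t ≥ (0:ℝ), |deriv g t| ≤ M * Real.exp (r * t))
    (n : ℕ) (hn : 1 ≤ n) :
    (∫ t in Set.Ioi (0:ℝ), Real.exp (-(s*t)) * (t ^ n / n.factorial) * deriv g t)
      = s * (∫ t in Set.Ioi (0:ℝ), Real.exp (-(s*t)) * (t ^ n / n.factorial) * g t)
        - ∫ t in Set.Ioi (0:ℝ), Real.exp (-(s*t)) * (t ^ (n-1) / (n-1).factorial) * g t := by
  have hs0 : 0 < s := lt_trans hr hrs
  set F : ℝ → ℝ := fun t => Real.exp (-(s*t)) * (t ^ n / n.factorial) * g t with hF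
  set D : ℝ → ℝ := fun t =>
    (-s) * (Real.exp (-(s*t)) * (t ^ n / n.factorial) * g t)
    + Real.exp (-(s*t)) * (t ^ (n-1) / (n-1).factorial) * g t
    + Real.exp (-(s*t)) * (t ^ n / n.factorial) * deriv g t with hD
  have hderiv : ∀ t : ℝ, HasDerivAt F (D t) t := by
    intro t
    have h1 : HasDerivAt (fun t : ℝ => Real.exp (-(s*t))) (-s * Real.exp (-(s*t))) t := by
      have := (Real.hasDerivAt_exp (-(s*t))).comp t (((hasDerivAt_id t).const_mul s).neg)
      convert this using 1 <;> first | rfl | (funext x; simp) | simp [mul_comm]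
    have h2 : HasDerivAt (fun t : ℝ => t ^ n / (n.factorial:ℝ))
        ((n:ℝ) * t ^ (n-1) / n.factorial) t := (hasDerivAt_pow n t).div_const _
    have h3 : HasDerivAt g (deriv g t) t := (hg t).hasDerivAt
    have h12 := (h1.mul h2).mul h3
    convert h12 using 1
    all_goals try rfl
    have hnat : n.factorial = n * (n-1).factorial := by
      obtain ⟨m, rfl⟩ := Nat.exists_eq_succ_of_ne_zero (by omega : n ≠ 0)
      simp [Nat.factorial_succ]
    have hfac : (n.factorial : ℝ) = (n:ℝ) * (n-1).factorial := by exact_mod_cast congrArg Nat.cast hnat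
    have hnpos : (n:ℝ) ≠ 0 := by positivity
    have hkey : (n:ℝ) * t ^ (n-1) / n.factorial = t ^ (n-1) / (n-1).factorial := by
      rw [hfac, mul_div_mul_left _ _ hnpos]
    rw [hD]
    simp only [Pi.mul_apply]
    rw [← hkey]
    ring
  have hint1 : IntegrableOn (fun t => Real.exp (-(s*t)) * (t ^ n / n.factorial) * g t)
      (Set.Ioi (0:ℝ)) := aux_integrable hM hrs hg.continuous hb0 n
  have hint2 : IntegrableOn (fun t => Real.exp (-(s*t)) * (t ^ (n-1) / (n-1).factorial) * g t)
      (Set.Ioi (0:ℝ)) := aux_integrable hM hrs hg.continuous hb0 (n-1)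
  have hint3 : IntegrableOn (fun t => Real.exp (-(s*t)) * (t ^ n / n.factorial) * deriv g t)
      (Set.Ioi (0:ℝ)) := aux_integrable hM hrs hg' hb1 n
  have hintD : IntegrableOn D (Set.Ioi (0:ℝ)) := ((hint1.const_mul (-s)).add hint2).add hint3
  have htend : Tendsto F atTop (nhds 0) := aux_tendsto_F hM hrs hb0 n
  have hIBP : ∫ t in Set.Ioi (0:ℝ), D t = 0 - F 0 :=
    integral_Ioi_of_hasDerivAt_of_tendsto' (fun x _ => hderiv x) hintD htend
  have hF0 : F 0 = 0 := by
    simp [hF, zero_pow (by omega : n ≠ 0)]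
  rw [hF0, sub_zero] at hIBP
  have hsplit : ∫ t in Set.Ioi (0:ℝ), D t
      = (-s) * (∫ t in Set.Ioi (0:ℝ), Real.exp (-(s*t)) * (t ^ n / n.factorial) * g t)
        + (∫ t in Set.Ioi (0:ℝ), Real.exp (-(s*t)) * (t ^ (n-1) / (n-1).factorial) * g t)
        + ∫ t in Set.Ioi (0:ℝ), Real.exp (-(s*t)) * (t ^ n / n.factorial) * deriv g t := by
    have hint1' : IntegrableOn (fun t => (-s) * (Real.exp (-(s*t)) * (t ^ n / n.factorial) * g t))
        (Set.Ioi (0:ℝ)) := hint1.const_mul (-s)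
    have hint12 : IntegrableOn (fun t => (-s) * (Real.exp (-(s*t)) * (t ^ n / n.factorial) * g t)
        + Real.exp (-(s*t)) * (t ^ (n-1) / (n-1).factorial) * g t) (Set.Ioi (0:ℝ)) :=
      hint1'.add hint2
    rw [hD]
    rw [integral_add hint12 hint3, integral_add hint1' hint2, integral_const_mul]
  rw [hsplit] at hIBP
  linarith

lemma aux_pascal (J : ℕ → ℝ) (s : ℝ) (p n : ℕ) (hn : p + 1 ≤ n) :
    ∑ k ∈ range (p+2), (-1:ℝ)^k * ((p+1).choose k : ℝ) * s^(p+1-k) * J (n-k)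
    = s * (∑ k ∈ range (p+1), (-1:ℝ)^k * (p.choose k : ℝ) * s^(p-k) * J (n-k))
      - ∑ k ∈ range (p+1), (-1:ℝ)^k * (p.choose k : ℝ) * s^(p-k) * J (n-1-k) := by
  set A : ℝ := ∑ k ∈ range (p+1), (-1:ℝ)^k * (p.choose k : ℝ) * s^(p-k) * J (n-1-k) with hA
  set B : ℝ := ∑ k ∈ range (p+1), (-1:ℝ)^k * (p.choose (k+1) : ℝ) * s^(p-k) * J (n-1-k) with hB
  set B' : ℝ := ∑ k ∈ range p, (-1:ℝ)^k * (p.choose (k+1) : ℝ) * s^(p-k) * J (n-1-k) with hB'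
  have hBB' : B = B' := by
    rw [hB, Finset.sum_range_succ, Nat.choose_succ_self]
    simp [hB']
  have hL : ∑ k ∈ range (p+2), (-1:ℝ)^k * ((p+1).choose k : ℝ) * s^(p+1-k) * J (n-k)
      = (-A - B) + s^(p+1) * J n := by
    rw [Finset.sum_range_succ']
    congr 1
    · rw [hA, hB, ← Finset.sum_neg_distrib, ← Finset.sum_sub_distrib]
      apply Finset.sum_congr rfl
      intro k hk
      have h1 : p + 1 - (k+1) = p - k := by omega
      have h2 : n - (k+1) = n - 1 - k := by omega
      rw [h1, h2, Nat.choose_succ_succ]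
      push_cast
      ring
    · simp
  have hR : s * (∑ k ∈ range (p+1), (-1:ℝ)^k * (p.choose k : ℝ) * s^(p-k) * J (n-k))
      = -B' + s^(p+1) * J n := by
    rw [Finset.sum_range_succ', mul_add]
    congr 1
    · rw [Finset.mul_sum, hB', ← Finset.sum_neg_distrib]
      apply Finset.sum_congr rfl
      intro k hk
      have hk' : k < p := Finset.mem_range.mp hk
      have h1 : p - k = (p - (k+1)) + 1 := by omega
      have h2 : n - (k+1) = n - 1 - k := by omega
      rw [h2, h1, pow_succ]
      ring
    · simp [pow_succ]
      ring
  rw [hL, hR, hBB']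
  ring

lemma aux_main (f : ℝ → ℝ) (M r : ℝ) (hM : 0 < M) (hr : 0 < r) :
    ∀ p : ℕ, ContDiff ℝ p f →
      (∀ j ≤ p, ∀ t ≥ (0:ℝ), |iteratedDeriv j f t| ≤ M * Real.exp (r * t)) →
      ∀ s, r < s → ∀ n : ℕ, p ≤ n →
      (∫ t in Set.Ioi (0:ℝ), Real.exp (-(s*t)) * (t ^ n / n.factorial) * iteratedDeriv p f t)
        = ∑ k ∈ range (p + 1), (-1:ℝ)^k * (p.choose k : ℝ) * s^(p-k) *
            (∫ t in Set.Ioi (0:ℝ), Real.exp (-(s*t)) * (t ^ (n-k) / (n-k).factorial) * f t) := by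
  intro p
  induction p with
  | zero => intro _ _ s hs n _; simp [iteratedDeriv_zero]
  | succ p ih =>
    intro hf hb s hs n hn
    have hfp : ContDiff ℝ p f := hf.of_le (by exact_mod_cast Nat.le_succ p)
    have hdg : Differentiable ℝ (iteratedDeriv p f) :=
      hf.differentiable_iteratedDeriv p (by exact_mod_cast Nat.lt_succ_self p)
    have hcont' : Continuous (deriv (iteratedDeriv p f)) := by
      rw [← iteratedDeriv_succ]
      exact hf.continuous_iteratedDeriv (p+1) (le_refl _)
    have hb' : ∀ t ≥ (0:ℝ), |deriv (iteratedDeriv p f) t| ≤ M * Real.exp (r * t) := by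
      intro t ht; rw [← iteratedDeriv_succ]; exact hb (p+1) le_rfl t ht
    have hstep := aux_step hM hs hr hdg hcont' (hb p (Nat.le_succ p)) hb' n (by omega)
    rw [iteratedDeriv_succ, hstep,
        ih hfp (fun j hj => hb j (le_trans hj (Nat.le_succ p))) s hs n (by omega),
        ih hfp (fun j hj => hb j (le_trans hj (Nat.le_succ p))) s hs (n-1) (by omega)]
    have hJ := aux_pascal (fun m => ∫ t in Set.Ioi (0:ℝ),
        Real.exp (-(s*t)) * (t ^ m / m.factorial) * f t) s p n hn
    beta_reduce at hJ ⊢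
    rw [← hJ]

theorem laplace_type_of_deriv (f : ℝ → ℝ) (p : ℕ) (M r : ℝ)
    (hf : ContDiff ℝ p f) (hM : 0 < M) (hr : 0 < r)
    (hbound : ∀ j ≤ p, ∀ t ≥ (0:ℝ), |iteratedDeriv j f t| ≤ M * Real.exp (r * t))
    (φ : ℕ → ℝ → ℝ)
    (hφ : ∀ n s, φ n s = ∫ t in Set.Ioi (0:ℝ),
        Real.exp (-(s*t)) * (t ^ n / n.factorial) * f t) :
    ∀ s > r, ∀ n : ℕ, p ≤ n →
      (∫ t in Set.Ioi (0:ℝ),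
          Real.exp (-(s*t)) * (t ^ n / n.factorial) * iteratedDeriv p f t)
        = ∑ k ∈ range (p + 1),
            (-1:ℝ) ^ k * (p.choose k : ℝ) * s ^ (p - k) * φ (n - k) s := by
  intro s hs n hn
  simp only [hφ]
  exact aux_main f M r hM hr p hf hbound s hs n hn
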